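/- arXiv:1111.6615 — 2 statements merged into one kernel-verified Lean document; each statement's English description precedes it below -/
import Mathlib

section
/- (Ramanujan's identity) Let a, b ∈ ℂ and let σ_a(n) = Σ_{d | n, d ≥ 1} d^a denote the complex divisor sum. Then for every s ∈ ℂ with Re(s) > max{1, Re(a)+1, Re(b)+1, Re(a+b)+1}, the series Σ_{n=1}^∞ σ_a(n) σ_b(n) n^{−s} converges absolutely and equals ζ(s) ζ(s−a) ζ(s−b) ζ(s−a−b) / ζ(2s−a−b). -/
open Complex

noncomputable section

/-- The complex divisor sum `σ_a(n) = ∑_{d ∣ n, d ≥ 1} d^a`. -/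
def divisorSum (a : ℂ) (n : ℕ) : ℂ := ∑ d ∈ n.divisors, (d : ℂ) ^ a

namespace RamanujanAux

open ArithmeticFunction Finset
open scoped ArithmeticFunction.Moebius

/-- `n ↦ n ^ c` as an arithmetic function. -/
def pf (c : ℂ) : ArithmeticFunction ℂ :=
  ⟨fun n => if n = 0 then 0 else (n : ℂ) ^ c, by simp⟩

lemma pf_apply_ne {c : ℂ} {n : ℕ} (hn : n ≠ 0) : pf c n = (n : ℂ) ^ c := if_neg hn

lemma pf_isMultiplicative (c : ℂ) : (pf c).IsMultiplicative := by
  constructor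
  · simp [pf]
  · intro m n h
    rcases eq_or_ne m 0 with rfl | hm
    · simp [pf]
    rcases eq_or_ne n 0 with rfl | hn
    · simp [pf]
    rw [pf_apply_ne (Nat.mul_ne_zero hm hn), pf_apply_ne hm, pf_apply_ne hn]
    push_cast
    exact natCast_mul_natCast_cpow m n c

lemma natCast_pow_cpow (p : ℕ) (c : ℂ) : ∀ i : ℕ, ((p ^ i : ℕ) : ℂ) ^ c = ((p : ℂ) ^ c) ^ i
  | 0 => by simp
  | i + 1 => by
    rw [pow_succ, Nat.cast_mul, natCast_mul_natCast_cpow, natCast_pow_cpow p c i, pow_succ]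

lemma pf_prime_pow (c : ℂ) {p : ℕ} (hp : p ≠ 0) (i : ℕ) :
    pf c (p ^ i) = ((p : ℂ) ^ c) ^ i := by
  rw [pf_apply_ne (pow_ne_zero _ hp), natCast_pow_cpow]


/-- `σ_c` as a convolution. -/
def sigmaf (c : ℂ) : ArithmeticFunction ℂ := pf 0 * pf c

lemma sigmaf_apply (c : ℂ) (n : ℕ) : sigmaf c n = ∑ d ∈ n.divisors, (d : ℂ) ^ c := by
  rcases eq_or_ne n 0 with rfl | hn
  · simp [sigmaf]
  rw [sigmaf, mul_apply, Nat.sum_divisorsAntidiagonal (f := fun x y => pf 0 x * pf c y)]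
  rw [← Nat.sum_div_divisors n (fun d => (d : ℂ) ^ c)]
  refine Finset.sum_congr rfl fun d hd => ?_
  have hd0 : d ≠ 0 := (Nat.pos_of_mem_divisors hd).ne'
  have hnd : n / d ≠ 0 :=
    Nat.div_ne_zero_iff.mpr ⟨hd0, Nat.le_of_dvd (Nat.pos_of_ne_zero hn) (Nat.dvd_of_mem_divisors hd)⟩
  rw [pf_apply_ne hd0, pf_apply_ne hnd, cpow_zero, one_mul]

lemma sigmaf_isMultiplicative (c : ℂ) : (sigmaf c).IsMultiplicative :=
  (pf_isMultiplicative 0).mul (pf_isMultiplicative c)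

/-- The square-supported Möbius-twisted function with `n = d ^ 2 ↦ μ d * d ^ c`. -/
def sqf (c : ℂ) : ArithmeticFunction ℂ :=
  ⟨fun n => if n.sqrt * n.sqrt = n then (μ n.sqrt : ℂ) * (n.sqrt : ℂ) ^ c else 0, by simp⟩

lemma sqf_apply_sq (c : ℂ) (d : ℕ) : sqf c (d * d) = (μ d : ℂ) * (d : ℂ) ^ c := by
  simp [sqf, Nat.sqrt_eq]

lemma sqf_apply_not_sq {c : ℂ} {n : ℕ} (h : ¬ IsSquare n) : sqf c n = 0 := by
  rw [sqf]
  simp only [coe_mk, ite_eq_right_iff]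
  intro hs
  exact absurd ⟨n.sqrt, hs.symm⟩ h

lemma sqf_isMultiplicative (c : ℂ) : (sqf c).IsMultiplicative := by
  constructor
  · simpa using sqf_apply_sq c 1
  · intro m n h
    by_cases hm : IsSquare m
    · by_cases hn : IsSquare n
      · obtain ⟨dm, rfl⟩ := hm
        obtain ⟨dn, rfl⟩ := hn
        have hcop : dm.Coprime dn :=
          Nat.Coprime.coprime_dvd_right (dvd_mul_right dn dn)
            (Nat.Coprime.coprime_dvd_left (dvd_mul_right dm dm) h)
        rw [show dm * dm * (dn * dn) = (dm * dn) * (dm * dn) by ring, sqf_apply_sq,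
          sqf_apply_sq, sqf_apply_sq, isMultiplicative_moebius.map_mul_of_coprime hcop]
        push_cast
        rw [natCast_mul_natCast_cpow]
        ring
      · have : ¬ IsSquare (m * n) := by
          intro ⟨r, hr⟩
          refine hn ?_
          obtain ⟨d, hd⟩ := exists_eq_pow_of_mul_eq_pow (a := n) (b := m) (c := r) (k := 2)
            (by simpa [Nat.isUnit_iff, gcd_eq_nat_gcd] using Nat.Coprime.gcd_eq_one h.symm)
            (by rw [mul_comm, hr, sq])
          exact ⟨d, by rw [hd, sq]⟩
        rw [sqf_apply_not_sq this, sqf_apply_not_sq hn, mul_zero]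
    · have : ¬ IsSquare (m * n) := by
        intro ⟨r, hr⟩
        refine hm ?_
        obtain ⟨d, hd⟩ := exists_eq_pow_of_mul_eq_pow (a := m) (b := n) (c := r) (k := 2)
          (by simpa [Nat.isUnit_iff, gcd_eq_nat_gcd] using Nat.Coprime.gcd_eq_one h) (by rw [hr, sq])
        exact ⟨d, by rw [hd, sq]⟩
      rw [sqf_apply_not_sq this, sqf_apply_not_sq hm, zero_mul]


/-! ### Geometric partial sums -/

/-- Partial geometric sum `1 + x + ⋯ + x ^ k`. -/
def Gs (x : ℂ) (k : ℕ) : ℂ := ∑ i ∈ Finset.range (k + 1), x ^ i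

lemma Gs_zero (x : ℂ) : Gs x 0 = 1 := by simp [Gs]

lemma Gs_succ_top (x : ℂ) (k : ℕ) : Gs x (k + 1) = Gs x k + x ^ (k + 1) :=
  Finset.sum_range_succ _ _

lemma Gs_succ_bot (x : ℂ) (k : ℕ) : Gs x (k + 1) = 1 + x * Gs x k := by
  rw [Gs, Finset.sum_range_succ']
  simp only [pow_zero, pow_succ']
  rw [← Finset.mul_sum, Gs, add_comm]

lemma Gs_add (x : ℂ) (u v : ℕ) : Gs x (u + v + 2) = Gs x v + x ^ (v + 1) * Gs x (u + 1) := by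
  have : u + v + 2 + 1 = (v + 1) + (u + 2) := by ring
  rw [Gs, this, Finset.sum_range_add]
  congr 1
  rw [Gs, Finset.mul_sum]
  exact Finset.sum_congr rfl fun i _ => by rw [pow_add]

lemma Gs_key (x : ℂ) (u v : ℕ) :
    Gs x (u + 1) * Gs x (v + 1) - x * Gs x u * Gs x v = Gs x (u + v + 2) := by
  rw [Gs_add, Gs_succ_top x v, Gs_succ_bot x u]
  ring


/-- The convolution sum at prime powers. -/
def Cs (x y : ℂ) (k : ℕ) : ℂ := ∑ l ∈ Finset.range (k + 1), Gs x (k - l) * (y ^ l * Gs x l)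

lemma Cs_zero (x y : ℂ) : Cs x y 0 = 1 := by simp [Cs, Gs_zero]

lemma Cs_one (x y : ℂ) : Cs x y 1 = Gs x 1 * Gs y 1 := by
  simp [Cs, Finset.sum_range_succ, Gs_succ_top, Gs_zero]
  ring

lemma Cs_rec (x y : ℂ) (k : ℕ) :
    Cs x y (k + 2) = x * y * Cs x y k + Gs x (k + 2) * Gs y (k + 2) := by
  have hGy : Gs y (k + 2) = 1 + y ^ (k + 2) + ∑ l ∈ Finset.range (k + 1), y ^ (l + 1) := by
    rw [Gs, Finset.sum_range_succ' (fun t => y ^ t) (k + 2), Finset.sum_range_succ]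
    simp only [pow_zero]
    ring
  have key : ∀ l ∈ Finset.range (k + 1),
      Gs x (k + 2 - (l + 1)) * (y ^ (l + 1) * Gs x (l + 1)) =
        x * y * (Gs x (k - l) * (y ^ l * Gs x l)) + y ^ (l + 1) * Gs x (k + 2) := by
    intro l hl
    have hlk : l ≤ k := Nat.lt_succ_iff.mp (Finset.mem_range.mp hl)
    have h1 : k + 2 - (l + 1) = (k - l) + 1 := by omega
    have h2 : (k - l) + l + 2 = k + 2 := by omega
    have hk := Gs_key x (k - l) l
    rw [h2] at hk
    rw [h1]
    linear_combination y ^ (l + 1) * hk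
  rw [Cs, Finset.sum_range_succ' _ (k + 2), Finset.sum_range_succ,
    Finset.sum_congr rfl key, Finset.sum_add_distrib, ← Finset.mul_sum, ← Finset.sum_mul, ← Cs,
    hGy]
  simp only [Nat.sub_self, pow_zero, Nat.sub_zero, Gs_zero]
  ring


/-! ### Values at prime powers -/

lemma mul_apply_prime_pow {f g : ArithmeticFunction ℂ} {p : ℕ} (hp : p.Prime) (k : ℕ) :
    (f * g) (p ^ k) = ∑ i ∈ Finset.range (k + 1), f (p ^ i) * g (p ^ (k - i)) := by
  rw [mul_apply, Nat.sum_divisorsAntidiagonal (f := fun x y => f x * g y),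
    Nat.sum_divisors_prime_pow hp]
  refine Finset.sum_congr rfl fun i hi => ?_
  have hik : i ≤ k := Nat.lt_succ_iff.mp (Finset.mem_range.mp hi)
  rw [Nat.pow_div hik hp.pos]

lemma sigmaf_prime_pow (c : ℂ) {p : ℕ} (hp : p.Prime) (k : ℕ) :
    sigmaf c (p ^ k) = Gs ((p : ℂ) ^ c) k := by
  rw [sigmaf_apply, Nat.sum_divisors_prime_pow hp, Gs]
  exact Finset.sum_congr rfl fun i _ => natCast_pow_cpow p c i

lemma pf_mul_pf_prime_pow (b c : ℂ) {p : ℕ} (hp : p.Prime) (m : ℕ) :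
    (pf b * pf (b + c)) (p ^ m) = ((p : ℂ) ^ b) ^ m * Gs ((p : ℂ) ^ c) m := by
  have hp0 : (p : ℂ) ≠ 0 := Nat.cast_ne_zero.mpr hp.pos.ne'
  rw [mul_apply_prime_pow hp]
  have : ∀ i ∈ Finset.range (m + 1),
      pf b (p ^ i) * pf (b + c) (p ^ (m - i)) =
        ((p : ℂ) ^ b) ^ m * ((p : ℂ) ^ c) ^ (m - i) := by
    intro i hi
    have him : i ≤ m := Nat.lt_succ_iff.mp (Finset.mem_range.mp hi)
    rw [pf_prime_pow b hp.pos.ne', pf_prime_pow (b + c) hp.pos.ne', cpow_add _ _ hp0,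
      mul_pow, ← mul_assoc, ← pow_add, Nat.add_sub_cancel' him]
  rw [Finset.sum_congr rfl this, ← Finset.mul_sum]
  congr 1
  rw [Gs]
  rw [← Finset.sum_range_reflect (fun j => ((p : ℂ) ^ c) ^ j) (m + 1)]
  exact Finset.sum_congr rfl fun i hi => by norm_num

lemma odd_not_isSquare_prime_pow {p : ℕ} (hp : p.Prime) {j : ℕ} (hj : Odd j) :
    ¬ IsSquare (p ^ j) := by
  rintro ⟨d, hd⟩
  have hdvd : d ∣ p ^ j := ⟨d, hd⟩
  obtain ⟨t, htj, rfl⟩ := (Nat.dvd_prime_pow hp).mp hdvd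
  rw [← pow_add] at hd
  have h2 := Nat.pow_right_injective hp.two_le hd
  obtain ⟨u, hu⟩ := hj
  omega

lemma sqf_prime_pow_eq_zero (c : ℂ) {p : ℕ} (hp : p.Prime) {j : ℕ} (hj0 : j ≠ 0)
    (hj2 : j ≠ 2) : sqf c (p ^ j) = 0 := by
  rcases Nat.even_or_odd j with he | ho
  · obtain ⟨t, rfl⟩ := he
    have ht : 2 ≤ t := by omega
    have hrw : p ^ (t + t) = p ^ t * p ^ t := by rw [← pow_add]
    rw [hrw, sqf_apply_sq]
    have : ¬ Squarefree (p ^ t) := fun hs =>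
      Irreducible.not_isUnit hp (hs p (by simpa [sq] using pow_dvd_pow p ht))
    rw [ArithmeticFunction.moebius_eq_zero_of_not_squarefree this]
    simp
  · exact sqf_apply_not_sq (odd_not_isSquare_prime_pow hp ho)

lemma sqf_prime (c : ℂ) {p : ℕ} (hp : p.Prime) : sqf c p = 0 := by
  have h := sqf_prime_pow_eq_zero c (j := 1) hp one_ne_zero (by norm_num)
  rwa [pow_one] at h

lemma sqf_prime_sq (c : ℂ) {p : ℕ} (hp : p.Prime) :
    sqf c (p ^ 2) = -((p : ℂ) ^ c) := by
  rw [sq, sqf_apply_sq, ArithmeticFunction.moebius_apply_prime hp]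
  push_cast
  ring

/-! ### The main arithmetic identity -/

theorem key_identity (a b : ℂ) :
    (sigmaf a).pmul (sigmaf b) = sigmaf a * (pf b * pf (b + a)) * sqf (a + b) := by
  have hmul1 : ((sigmaf a).pmul (sigmaf b)).IsMultiplicative :=
    (sigmaf_isMultiplicative a).pmul (sigmaf_isMultiplicative b)
  have hmul2 : (sigmaf a * (pf b * pf (b + a)) * sqf (a + b)).IsMultiplicative :=
    (((sigmaf_isMultiplicative a).mul
      ((pf_isMultiplicative b).mul (pf_isMultiplicative (b + a)))).mul
        (sqf_isMultiplicative (a + b)))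
  rw [ArithmeticFunction.IsMultiplicative.eq_iff_eq_on_prime_powers _ hmul1 _ hmul2]
  intro p k hp
  have hp0 : (p : ℂ) ≠ 0 := Nat.cast_ne_zero.mpr hp.pos.ne'
  set x : ℂ := (p : ℂ) ^ a with hx
  set y : ℂ := (p : ℂ) ^ b with hy
  have hC : ∀ m : ℕ, (sigmaf a * (pf b * pf (b + a))) (p ^ m) = Cs x y m := by
    intro m
    rw [mul_apply_prime_pow hp, Cs]
    rw [← Finset.sum_range_reflect
      (fun l => Gs x (m - l) * (y ^ l * Gs x l)) (m + 1)]
    refine Finset.sum_congr rfl fun i hi => ?_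
    have him : i ≤ m := Nat.lt_succ_iff.mp (Finset.mem_range.mp hi)
    rw [sigmaf_prime_pow a hp, pf_mul_pf_prime_pow b a hp]
    have h1 : m - (m - i) = i := by omega
    have h2 : m + 1 - 1 - i = m - i := by omega
    rw [h2, h1]
    try ring
  have hsq : (p:ℂ) ^ (a + b) = x * y := by rw [cpow_add _ _ hp0]
  rw [pmul_apply, sigmaf_prime_pow a hp, sigmaf_prime_pow b hp, mul_comm (sigmaf a * _),
    mul_apply_prime_pow hp]
  rcases k with - | - | m
  · have h0 := hC 0
    rw [pow_zero] at h0
    simp only [zero_add, Finset.sum_range_one, Nat.sub_zero, pow_zero, Gs_zero,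
      (sqf_isMultiplicative (a + b)).map_one, one_mul, h0, Cs_zero, mul_one]
  · rw [Finset.sum_range_succ, Finset.sum_range_one]
    simp only [Nat.sub_self, Nat.sub_zero, pow_zero, pow_one]
    rw [(sqf_isMultiplicative (a + b)).map_one, one_mul, hC 1, Cs_one,
      sqf_prime (a + b) hp, zero_mul, add_zero]
  · rw [Finset.sum_range_succ' _ (m + 2), Finset.sum_range_succ' _ (m + 1),
      Finset.sum_range_succ' _ m]
    have hzero : ∀ i ∈ Finset.range m,
        sqf (a + b) (p ^ (i + 1 + 1 + 1)) * (sigmaf a * (pf b * pf (b + a)))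
          (p ^ (m + 2 - (i + 1 + 1 + 1))) = 0 := by
      intro i hi
      rw [sqf_prime_pow_eq_zero (a + b) hp (by omega) (by omega), zero_mul]
    rw [Finset.sum_congr rfl hzero, Finset.sum_const_zero, zero_add]
    rw [show (0:ℕ) + 1 + 1 = 2 by norm_num, show (0:ℕ) + 1 = 1 by norm_num,
      show m + 1 + 1 - 2 = m by omega, show m + 1 + 1 - 1 = m + 1 by omega,
      show m + 1 + 1 - 0 = m + 2 by omega, pow_zero, pow_one,
      (sqf_isMultiplicative (a + b)).map_one, one_mul, sqf_prime_sq (a + b) hp,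
      sqf_prime (a + b) hp, hC m, hC (m + 2), hsq, Cs_rec, zero_mul, add_zero]
    ring


/-! ### L-series computations -/

open LSeries
open scoped LSeries.notation

lemma LSeriesSummable_pf {c s : ℂ} (h : c.re + 1 < s.re) :
    LSeriesSummable ↗(pf c) s := by
  refine LSeriesSummable_of_le_const_mul_rpow (x := c.re + 1) h ⟨1, fun n hn => ?_⟩
  rw [pf_apply_ne hn, norm_natCast_cpow_of_pos (Nat.pos_of_ne_zero hn), one_mul,
    add_sub_cancel_right]

lemma LSeries_pf {c s : ℂ} (h : c.re + 1 < s.re) :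
    LSeries ↗(pf c) s = riemannZeta (s - c) := by
  have h1 : 1 < (s - c).re := by
    rw [sub_re]; linarith
  rw [zeta_eq_tsum_one_div_nat_cpow h1, LSeries]
  refine tsum_congr fun n => ?_
  rcases eq_or_ne n 0 with rfl | hn
  · rw [LSeries.term_zero, Nat.cast_zero, zero_cpow (ne_zero_of_one_lt_re h1), div_zero]
  · rw [LSeries.term_of_ne_zero hn, pf_apply_ne hn]
    have hn0 : (n : ℂ) ≠ 0 := Nat.cast_ne_zero.mpr hn
    rw [cpow_sub _ _ hn0, one_div_div]

lemma term_sqf_sq (c s : ℂ) (d : ℕ) :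
    LSeries.term ↗(sqf c) s (d * d) = LSeries.term ↗(μ) (2 * s - c) d := by
  rcases eq_or_ne d 0 with rfl | hd
  · simp
  · have hdd : d * d ≠ 0 := Nat.mul_ne_zero hd hd
    rw [LSeries.term_of_ne_zero hdd, LSeries.term_of_ne_zero hd, sqf_apply_sq]
    have hd0 : (d : ℂ) ≠ 0 := Nat.cast_ne_zero.mpr hd
    have h1 : ((d * d : ℕ) : ℂ) ^ s = (d : ℂ) ^ (2 * s) := by
      have h2 := natCast_cpow_natCast_mul d 2 s
      push_cast at h2 ⊢
      rw [h2, sq]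
    rw [h1, cpow_sub _ _ hd0, div_div_eq_mul_div]

lemma sqf_not_mul_self {c : ℂ} {n : ℕ} (h : n ∉ Set.range (fun d : ℕ => d * d)) :
    sqf c n = 0 := by
  refine sqf_apply_not_sq fun ⟨r, hr⟩ => h ⟨r, hr.symm⟩

lemma term_sqf_support (c s : ℂ) :
    ∀ n ∉ Set.range (fun d : ℕ => d * d), LSeries.term ↗(sqf c) s n = 0 := by
  intro n hn
  rcases eq_or_ne n 0 with rfl | hn0
  · exact LSeries.term_zero _ _
  · rw [LSeries.term_of_ne_zero hn0, sqf_not_mul_self hn, zero_div]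

lemma mul_self_injective : Function.Injective (fun d : ℕ => d * d) := by
  intro d e h
  exact Nat.mul_self_inj.mp h

lemma LSeriesSummable_sqf {c s : ℂ} (h1 : 1 < (2 * s - c).re) :
    LSeriesSummable ↗(sqf c) s := by
  rw [LSeriesSummable, ← Function.Injective.summable_iff mul_self_injective
    (term_sqf_support c s)]
  have : (LSeries.term ↗(sqf c) s) ∘ (fun d : ℕ => d * d) = LSeries.term ↗(μ) (2 * s - c) :=
    funext fun d => term_sqf_sq c s d
  rw [this]
  exact ArithmeticFunction.LSeriesSummable_moebius_iff.mpr h1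

lemma LSeries_sqf {c s : ℂ} (h1 : 1 < (2 * s - c).re) :
    LSeries ↗(sqf c) s = (riemannZeta (2 * s - c))⁻¹ := by
  have heq : LSeries ↗(sqf c) s = LSeries ↗(μ) (2 * s - c) := by
    rw [LSeries, LSeries, ← Function.Injective.tsum_eq mul_self_injective
      (f := LSeries.term ↗(sqf c) s)
      (Function.support_subset_iff'.mpr (term_sqf_support c s))]
    exact tsum_congr fun d => term_sqf_sq c s d
  rw [heq]
  have hz := ArithmeticFunction.LSeries_zeta_mul_Lseries_moebius (s := 2 * s - c) h1
  rw [ArithmeticFunction.LSeries_zeta_eq_riemannZeta h1] at hz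
  field_simp [riemannZeta_ne_zero_of_one_lt_re h1] at hz ⊢
  linear_combination hz

end RamanujanAux

section Main

open RamanujanAux LSeries ArithmeticFunction
open scoped LSeries.notation

theorem ramanujan_identity (a b s : ℂ)
    (hs1 : 1 < s.re) (hsa : a.re + 1 < s.re) (hsb : b.re + 1 < s.re)
    (hsab : (a + b).re + 1 < s.re) :
    Summable (fun n : ℕ+ => ‖divisorSum a n * divisorSum b n / (n : ℂ) ^ s‖) ∧
    ∑' n : ℕ+, divisorSum a n * divisorSum b n / (n : ℂ) ^ s =
      riemannZeta s * riemannZeta (s - a) * riemannZeta (s - b) *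
        riemannZeta (s - a - b) / riemannZeta (2 * s - a - b) := by
  have hab := hsab
  rw [add_re] at hab
  have h2s : 1 < (2 * s - (a + b)).re := by
    have : (2 * s - (a + b)).re = 2 * s.re - (a.re + b.re) := by
      simp [Complex.sub_re, Complex.mul_re, Complex.add_re]
    rw [this]
    linarith
  have hs0 : (0 : ℂ).re + 1 < s.re := by simpa using hs1
  have hsba : (b + a).re + 1 < s.re := by rw [add_re]; linarith
  have hS1 : LSeriesSummable ↗(sigmaf a) s := by
    rw [sigmaf]
    exact LSeriesSummable_mul (LSeriesSummable_pf hs0) (LSeriesSummable_pf hsa)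
  have hS2 : LSeriesSummable ↗(pf b * pf (b + a)) s :=
    LSeriesSummable_mul (LSeriesSummable_pf hsb) (LSeriesSummable_pf hsba)
  have hS3 : LSeriesSummable ↗(sqf (a + b)) s := LSeriesSummable_sqf h2s
  have hSF : LSeriesSummable ↗((sigmaf a).pmul (sigmaf b)) s := by
    rw [key_identity a b]
    exact LSeriesSummable_mul (LSeriesSummable_mul hS1 hS2) hS3
  have hLF : LSeries ↗((sigmaf a).pmul (sigmaf b)) s =
      riemannZeta s * riemannZeta (s - a) * riemannZeta (s - b) *
        riemannZeta (s - a - b) / riemannZeta (2 * s - a - b) := by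
    rw [key_identity a b, LSeries_mul' (LSeriesSummable_mul hS1 hS2) hS3, LSeries_mul' hS1 hS2]
    rw [show sigmaf a = pf 0 * pf a from rfl,
      LSeries_mul' (LSeriesSummable_pf hs0) (LSeriesSummable_pf hsa),
      LSeries_mul' (LSeriesSummable_pf hsb) (LSeriesSummable_pf hsba),
      LSeries_pf hs0, LSeries_pf hsa, LSeries_pf hsb, LSeries_pf hsba, LSeries_sqf h2s]
    rw [sub_zero, show s - (b + a) = s - a - b by ring,
      show 2 * s - (a + b) = 2 * s - a - b by ring, div_eq_mul_inv]
    ring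
  have hterm : ∀ n : ℕ, n ≠ 0 → LSeries.term ↗((sigmaf a).pmul (sigmaf b)) s n =
      divisorSum a n * divisorSum b n / (n : ℂ) ^ s := by
    intro n hn
    rw [LSeries.term_of_ne_zero hn, ArithmeticFunction.pmul_apply, sigmaf_apply, sigmaf_apply]
    rfl
  have hcoe : ∀ n : ℕ+, LSeries.term ↗((sigmaf a).pmul (sigmaf b)) s (n : ℕ) =
      divisorSum a n * divisorSum b n / (n : ℂ) ^ s := fun n => hterm n n.pos.ne'
  have hsumN : Summable fun n : ℕ => ‖LSeries.term ↗((sigmaf a).pmul (sigmaf b)) s n‖ :=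
    summable_norm_iff.mpr hSF
  have hsupp : ∀ x ∉ Set.range ((↑·) : ℕ+ → ℕ),
      LSeries.term ↗((sigmaf a).pmul (sigmaf b)) s x = 0 := by
    intro x hx
    have hx0 : x = 0 := by
      by_contra h0
      exact hx ⟨⟨x, Nat.pos_of_ne_zero h0⟩, rfl⟩
    rw [hx0]
    exact LSeries.term_zero _ _
  constructor
  · refine Summable.congr (hsumN.comp_injective PNat.coe_injective) fun n => ?_
    simp only [Function.comp_apply]
    rw [hcoe n]
  · have htsum := Function.Injective.tsum_eq (g := ((↑·) : ℕ+ → ℕ)) PNat.coe_injective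
      (f := LSeries.term ↗((sigmaf a).pmul (sigmaf b)) s)
      (Function.support_subset_iff'.mpr hsupp)
    calc ∑' n : ℕ+, divisorSum a n * divisorSum b n / (n : ℂ) ^ s
        = ∑' n : ℕ+, LSeries.term ↗((sigmaf a).pmul (sigmaf b)) s (n : ℕ) :=
          (tsum_congr hcoe).symm
      _ = LSeries ↗((sigmaf a).pmul (sigmaf b)) s := htsum
      _ = _ := hLF

end Main

end
end

section
/- Let (s_n) be a sequence of complex numbers, s_n = σ_n + i t_n with σ_n ≥ 1/2, and set λ_n = s_n(1 − s_n). Assume Re(λ_n) → ∞ and Im(λ_n)·log(Re λ_n)/√(Re λ_n) → 0 as n → ∞. Then |t_n| → ∞, the sequence (σ_n) is bounded, and (σ_n − 1/2)·log|t_n| → 0 as n → ∞. -/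
open Filter Complex

noncomputable section

theorem spectral_parameter_region
    (σ t : ℕ → ℝ) (hσ : ∀ n, 1 / 2 ≤ σ n)
    (lam : ℕ → ℂ)
    (hlam : ∀ n, lam n =
      (↑(σ n) + ↑(t n) * Complex.I) * (1 - (↑(σ n) + ↑(t n) * Complex.I)))
    (hre : Tendsto (fun n => (lam n).re) atTop atTop)
    (him : Tendsto
      (fun n => (lam n).im * Real.log ((lam n).re) / Real.sqrt ((lam n).re))
      atTop (nhds 0)) :
    Tendsto (fun n => |t n|) atTop atTop ∧
    (∃ C : ℝ, ∀ n, σ n ≤ C) ∧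
    Tendsto (fun n => (σ n - 1 / 2) * Real.log |t n|) atTop (nhds 0) := by
  have hre_eq : ∀ n, (lam n).re = σ n - σ n ^ 2 + t n ^ 2 := by
    intro n; rw [hlam n]; simp [Complex.mul_re]; ring
  have him_eq : ∀ n, (lam n).im = t n * (1 - 2 * σ n) := by
    intro n; rw [hlam n]; simp [Complex.mul_im]; ring
  -- |t| → ∞
  have htsq : Tendsto (fun n => t n ^ 2) atTop atTop := by
    apply tendsto_atTop_mono (f := fun n => (lam n).re - 1/4)
    · intro n
      rw [hre_eq]
      nlinarith [sq_nonneg (σ n - 1/2)]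
    · exact tendsto_atTop_add_const_right _ _ hre
  have habs : Tendsto (fun n => |t n|) atTop atTop := by
    rw [tendsto_atTop] at htsq ⊢
    intro b
    filter_upwards [htsq (b^2 + 1)] with n hn
    have h1 : |t n| ^ 2 = t n ^ 2 := sq_abs _
    nlinarith [abs_nonneg (t n), abs_nonneg b, le_abs_self b]
  -- eventual facts
  have hev_t : ∀ᶠ n in atTop, 1 ≤ |t n| := habs.eventually_ge_atTop 1
  have hev_R : ∀ᶠ n in atTop, 4 ≤ (lam n).re := hre.eventually_ge_atTop 4
  have hb0 : Tendsto
      (fun n => |(lam n).im * Real.log ((lam n).re) / Real.sqrt ((lam n).re)|)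
      atTop (nhds 0) := by
    have := him.abs; simpa using this
  have hev_b : ∀ᶠ n in atTop,
      |(lam n).im * Real.log ((lam n).re) / Real.sqrt ((lam n).re)| < 1/4 :=
    hb0.eventually_lt_const (by norm_num)
  have hlog4 : (1 : ℝ) ≤ Real.log 4 := by
    rw [Real.le_log_iff_exp_le (by norm_num)]
    calc Real.exp 1 ≤ 2.7182818286 := (Real.exp_one_lt_d9).le
    _ ≤ 4 := by norm_num
  -- key eventual bound: σ n ≤ 3/4
  have hkey : ∀ᶠ n in atTop, σ n ≤ 3/4 := by
    filter_upwards [hev_t, hev_R, hev_b] with n ht hR hb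
    by_contra hcon
    push_neg at hcon
    set T := |t n| with hT
    set R := (lam n).re with hRdef
    have hRpos : (0:ℝ) < R := by linarith
    have hL : (1:ℝ) ≤ Real.log R :=
      hlog4.trans (Real.log_le_log (by norm_num) hR)
    have hsqR_pos : 0 < Real.sqrt R := Real.sqrt_pos.2 hRpos
    have hRle : R ≤ (2*T)^2 := by
      have := hre_eq n
      have hsig := hσ n
      have hT2 : t n ^ 2 = T^2 := (_root_.sq_abs (t n)).symm
      nlinarith [sq_nonneg (σ n - 1/2)]
    have hsqRle : Real.sqrt R ≤ 2*T := by
      have := Real.sqrt_le_sqrt hRle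
      rwa [Real.sqrt_sq (by positivity)] at this
    have him_abs : |(lam n).im| = T * (2 * σ n - 1) := by
      rw [him_eq, abs_mul, hT, abs_of_nonpos (by linarith [hσ n] : 1 - 2 * σ n ≤ 0)]
      ring
    have hbval : |(lam n).im * Real.log R / Real.sqrt R|
        = T * (2 * σ n - 1) * Real.log R / Real.sqrt R := by
      rw [abs_div, abs_mul, him_abs, _root_.abs_of_nonneg (by linarith : (0:ℝ) ≤ Real.log R),
        _root_.abs_of_nonneg hsqR_pos.le]
    rw [hbval] at hb
    have hmul : T * (2 * σ n - 1) * Real.log R < (1/4) * Real.sqrt R := by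
      rw [div_lt_iff₀ hsqR_pos] at hb; linarith
    nlinarith [mul_le_mul_of_nonneg_left hL (by nlinarith : (0:ℝ) ≤ T * (2 * σ n - 1))]
  -- boundedness
  obtain ⟨N, hN⟩ := eventually_atTop.1 hkey
  have hbdd : ∃ C : ℝ, ∀ n, σ n ≤ C := by
    refine ⟨3/4 + ∑ i ∈ Finset.range N, |σ i|, fun n => ?_⟩
    have hsum : (0:ℝ) ≤ ∑ i ∈ Finset.range N, |σ i| :=
      Finset.sum_nonneg fun i _ => abs_nonneg _
    rcases le_or_gt N n with h | h
    · linarith [hN n h]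
    · have : |σ n| ≤ ∑ i ∈ Finset.range N, |σ i| :=
        Finset.single_le_sum (fun i _ => abs_nonneg (σ i)) (Finset.mem_range.2 h)
      linarith [le_abs_self (σ n)]
  -- squeeze for the third part
  have hmain : Tendsto (fun n => (σ n - 1 / 2) * Real.log |t n|) atTop (nhds 0) := by
    apply tendsto_of_tendsto_of_tendsto_of_le_of_le' tendsto_const_nhds hb0
    · filter_upwards [hev_t] with n ht
      have := hσ n
      have : (0:ℝ) ≤ Real.log |t n| := Real.log_nonneg ht
      nlinarith [hσ n]
    · filter_upwards [hev_t, hev_R, hkey] with n ht hR hσ34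
      set T := |t n| with hT
      set R := (lam n).re with hRdef
      have hTpos : (0:ℝ) < T := by linarith
      have hRpos : (0:ℝ) < R := by linarith
      have hL : (1:ℝ) ≤ Real.log R :=
        hlog4.trans (Real.log_le_log (by norm_num) hR)
      have hsqR_pos : 0 < Real.sqrt R := Real.sqrt_pos.2 hRpos
      have hT2 : t n ^ 2 = T^2 := (_root_.sq_abs (t n)).symm
      have hRle : R ≤ (2*T)^2 := by
        have := hre_eq n
        have hsig := hσ n
        nlinarith [sq_nonneg (σ n - 1/2)]
      have hsqRle : Real.sqrt R ≤ 2*T := by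
        have := Real.sqrt_le_sqrt hRle
        rwa [Real.sqrt_sq (by positivity)] at this
      have hRge : T^2 ≤ R := by
        have := hre_eq n
        have hsig := hσ n
        nlinarith
      have hlogT : 2 * Real.log T ≤ Real.log R := by
        calc 2 * Real.log T = Real.log (T^2) := by
              rw [Real.log_pow]; push_cast; ring
        _ ≤ Real.log R := Real.log_le_log (by positivity) hRge
      have him_abs : |(lam n).im| = T * (2 * σ n - 1) := by
        rw [him_eq, abs_mul, hT, abs_of_nonpos (by linarith [hσ n] : 1 - 2 * σ n ≤ 0)]
        ring
      have hbval : |(lam n).im * Real.log R / Real.sqrt R|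
          = T * (2 * σ n - 1) * Real.log R / Real.sqrt R := by
        rw [abs_div, abs_mul, him_abs, _root_.abs_of_nonneg (by linarith : (0:ℝ) ≤ Real.log R),
          _root_.abs_of_nonneg hsqR_pos.le]
      rw [hbval, le_div_iff₀ hsqR_pos]
      have hlogT0 : (0:ℝ) ≤ Real.log T := Real.log_nonneg ht
      have hσ12 : (0:ℝ) ≤ σ n - 1/2 := by linarith [hσ n]
      -- (σ-1/2) log T * sqrt R ≤ (σ-1/2) log T * 2T ≤ T(2σ-1) log R
      calc (σ n - 1/2) * Real.log T * Real.sqrt R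
          ≤ (σ n - 1/2) * Real.log T * (2*T) := by
            apply mul_le_mul_of_nonneg_left hsqRle (by positivity)
      _ ≤ T * (2 * σ n - 1) * Real.log R := by
            have hlogT' : Real.log T ≤ Real.log R := by linarith
            have hnn : (0:ℝ) ≤ T * (2 * σ n - 1) := by nlinarith
            nlinarith [mul_le_mul_of_nonneg_left hlogT' hnn]
  exact ⟨habs, hbdd, hmain⟩
end
end
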